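/- Let R be a Cohen–Macaulay local ring with regular sequence x_1, …, x_d and let t ≥ 2. Set J = (x_1^t, x_2^t, x_3, …, x_d). Then (J : (x_1, x_2)) = (x_1^t, x_2^t, x_3, …, x_d, (x_1 x_2)^{t-1}). -/

import Mathlib

open Ideal IsLocalRing

section Aux
variable {R : Type*} [CommRing R]

/-- `u` is a non-zerodivisor modulo the ideal `I`. -/
def NZDM (I : Ideal R) (u : R) : Prop := ∀ r : R, r * u ∈ I → r ∈ I

lemma mem_sup_span_single {I : Ideal R} {u r : R} :
    r ∈ I ⊔ Ideal.span {u} ↔ ∃ s, r - s * u ∈ I := by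
  rw [Submodule.mem_sup]
  constructor
  · rintro ⟨y, hy, z, hz, rfl⟩
    obtain ⟨s, rfl⟩ := Ideal.mem_span_singleton'.1 hz
    exact ⟨s, by simpa using hy⟩
  · rintro ⟨s, h⟩
    exact ⟨r - s * u, h, s * u, Ideal.mem_span_singleton'.2 ⟨s, rfl⟩, by ring⟩

lemma NZDM.pow {I : Ideal R} {u : R} (h : NZDM I u) (k : ℕ) : NZDM I (u ^ k) := by
  induction k with
  | zero => intro r hr; simpa using hr
  | succ k ih =>
    intro r hr
    have : (r * u) * u ^ k ∈ I := by rw [show (r * u) * u ^ k = r * u ^ (k+1) by ring]; exact hr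
    exact h r (ih _ this)

lemma NZDM.swap_easy {I : Ideal R} {u v : R} (hu : NZDM I u)
    (hv : NZDM (I ⊔ Ideal.span {u}) v) : NZDM (I ⊔ Ideal.span {v}) u := by
  intro r hr
  obtain ⟨s, hs⟩ := mem_sup_span_single.1 hr
  have hsv : s * v ∈ I ⊔ Ideal.span {u} := by
    rw [mem_sup_span_single]
    exact ⟨r, by have := I.neg_mem hs; simpa [neg_sub] using this⟩
  obtain ⟨s', hs'⟩ := mem_sup_span_single.1 (hv s hsv)
  have : (r - s' * v) * u ∈ I := by
    have := I.add_mem hs (I.mul_mem_right v hs')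
    rw [show r * u - s * v + (s - s' * u) * v = (r - s' * v) * u by ring] at this
    exact this
  exact mem_sup_span_single.2 ⟨s', hu _ this⟩

lemma NZDM.swap_nak [IsNoetherianRing R] [IsLocalRing R] {I : Ideal R} {u v : R}
    (hum : u ∈ maximalIdeal R) (hu : NZDM I u)
    (hv : NZDM (I ⊔ Ideal.span {u}) v) : NZDM I v := by
  set K := I.colon (Ideal.span {v}) with hK
  have hKm : K ≤ I ⊔ (maximalIdeal R) • K := by
    intro r hr
    have hrv : r * v ∈ I := Ideal.mem_colon_span_singleton.1 hr
    obtain ⟨s, hs⟩ := mem_sup_span_single.1 (hv r (Ideal.mem_sup_left hrv))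
    have hsv : (s * v) * u ∈ I := by
      have := I.sub_mem hrv (I.mul_mem_right v hs)
      rw [show r * v - (r - s * u) * v = (s * v) * u by ring] at this
      exact this
    have hsK : s ∈ K := Ideal.mem_colon_span_singleton.2 (hu _ hsv)
    have : r = (r - s * u) + u * s := by ring
    rw [this]
    exact Submodule.add_mem _ (Ideal.mem_sup_left hs)
      (Ideal.mem_sup_right (Submodule.smul_mem_smul hum hsK))
  have hjac : maximalIdeal R ≤ Ideal.jacobson ⊥ := by
    rw [IsLocalRing.jacobson_eq_maximalIdeal ⊥ bot_ne_top]
  have hnak := Submodule.sup_eq_sup_smul_of_le_smul_of_le_jacobson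
    (N := I) (IsNoetherian.noetherian K) hjac hKm
  have hKI : K ≤ I := by
    have : I ⊔ K = I := by rw [hnak]; simp
    exact le_sup_right.trans this.le
  intro r hr
  exact hKI (Ideal.mem_colon_span_singleton.2 hr)


/-- If `u` is NZD mod `I` and `v` is NZD mod `I + (u)`, then `v` is NZD mod `I + (u^m)`. -/
lemma NZDM.pow_base {I : Ideal R} {u v : R} (hu : NZDM I u)
    (hv : NZDM (I ⊔ Ideal.span {u}) v) :
    ∀ m : ℕ, 1 ≤ m → NZDM (I ⊔ Ideal.span {u ^ m}) v := by
  intro m hm1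
  induction m, hm1 using Nat.le_induction with
  | base => intro r hr; rw [pow_one] at hr ⊢; exact hv r hr
  | succ m hm ih =>
    intro r hr
    obtain ⟨c, hc⟩ := mem_sup_span_single.1 hr
    -- r*v ∈ I + (u)
    have hru : r * v ∈ I ⊔ Ideal.span {u} := mem_sup_span_single.2
      ⟨c * u ^ m, by rw [show r * v - c * u ^ m * u = r * v - c * u ^ (m+1) by ring]; exact hc⟩
    obtain ⟨s, hs⟩ := mem_sup_span_single.1 (hv r hru)
    have h2 : (s * v - c * u ^ m) * u ∈ I := by
      have := I.sub_mem hc (I.mul_mem_right v hs)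
      rwa [show r * v - c * u ^ (m+1) - (r - s * u) * v = (s * v - c * u ^ m) * u by ring] at this
    have h3 : s * v ∈ I ⊔ Ideal.span {u ^ m} := mem_sup_span_single.2 ⟨c, hu _ h2⟩
    obtain ⟨w, hw⟩ := mem_sup_span_single.1 (ih s h3)
    refine mem_sup_span_single.2 ⟨w, ?_⟩
    have := I.add_mem hs (I.mul_mem_right u hw)
    rwa [show r - s * u + (s - w * u ^ m) * u = r - w * u ^ (m+1) by ring] at this

lemma mem_sup3 {I : Ideal R} {u v r : R} :
    r ∈ I ⊔ Ideal.span {u} ⊔ Ideal.span {v} ↔ ∃ c e, r - c * u - e * v ∈ I := by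
  rw [mem_sup_span_single]
  constructor
  · rintro ⟨e, he⟩
    obtain ⟨c, hc⟩ := mem_sup_span_single.1 he
    exact ⟨c, e, by rwa [show r - c * u - e * v = r - e * v - c * u by ring]⟩
  · rintro ⟨c, e, h⟩
    exact ⟨e, mem_sup_span_single.2 ⟨c, by rwa [show r - e * v - c * u = r - c * u - e * v by ring]⟩⟩

lemma mem_sup4 {I : Ideal R} {u v w r : R} :
    r ∈ I ⊔ Ideal.span {u} ⊔ Ideal.span {v} ⊔ Ideal.span {w} ↔
      ∃ c e f, r - c * u - e * v - f * w ∈ I := by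
  rw [mem_sup_span_single]
  constructor
  · rintro ⟨f, hf⟩
    obtain ⟨c, e, h⟩ := mem_sup3.1 hf
    exact ⟨c, e, f, by rwa [show r - c*u - e*v - f*w = r - f*w - c*u - e*v by ring]⟩
  · rintro ⟨c, e, f, h⟩
    exact ⟨f, mem_sup3.2 ⟨c, e, by rwa [show r - f*w - c*u - e*v = r - c*u - e*v - f*w by ring]⟩⟩

/-- Step A: if `r * a ∈ I + (a^{k+2}, b^{k+2})` then `r ∈ I + (a^{k+1}, b^{k+2})`. -/
lemma stepA {I : Ideal R} {a b r : R} {k : ℕ} (ha : NZDM I a)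
    (hb : NZDM (I ⊔ Ideal.span {a}) b)
    (hra : r * a ∈ I ⊔ Ideal.span {a ^ (k+2)} ⊔ Ideal.span {b ^ (k+2)}) :
    r ∈ I ⊔ Ideal.span {a ^ (k+1)} ⊔ Ideal.span {b ^ (k+2)} := by
  obtain ⟨c, e, hce⟩ := mem_sup3.1 hra
  have hbt : NZDM (I ⊔ Ideal.span {a}) (b ^ (k+2)) := hb.pow _
  have h1 : e * b ^ (k+2) ∈ I ⊔ Ideal.span {a} := mem_sup_span_single.2
    ⟨r - c * a ^ (k+1), by
      have := I.neg_mem hce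
      rwa [show -(r * a - c * a ^ (k+2) - e * b ^ (k+2)) =
        e * b ^ (k+2) - (r - c * a ^ (k+1)) * a by ring] at this⟩
  obtain ⟨e', he'⟩ := mem_sup_span_single.1 (hbt e h1)
  have h2 : (r - c * a ^ (k+1) - e' * b ^ (k+2)) * a ∈ I := by
    have := I.add_mem hce (I.mul_mem_right (b ^ (k+2)) he')
    rwa [show r * a - c * a ^ (k+2) - e * b ^ (k+2) + (e - e' * a) * b ^ (k+2) =
      (r - c * a ^ (k+1) - e' * b ^ (k+2)) * a by ring] at this
  exact mem_sup3.2 ⟨c, e', ha _ h2⟩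

/-- The two-variable colon computation. -/
lemma keyColon [IsNoetherianRing R] [IsLocalRing R] {I : Ideal R} {a b r : R} {k : ℕ}
    (ham : a ∈ maximalIdeal R)
    (ha : NZDM I a) (hb : NZDM (I ⊔ Ideal.span {a}) b)
    (hra : r * a ∈ I ⊔ Ideal.span {a ^ (k+2)} ⊔ Ideal.span {b ^ (k+2)})
    (hrb : r * b ∈ I ⊔ Ideal.span {a ^ (k+2)} ⊔ Ideal.span {b ^ (k+2)}) :
    r ∈ I ⊔ Ideal.span {a ^ (k+2)} ⊔ Ideal.span {b ^ (k+2)} ⊔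
      Ideal.span {(a * b) ^ (k+1)} := by
  have hb' : NZDM I b := NZDM.swap_nak ham ha hb
  have ha' : NZDM (I ⊔ Ideal.span {b}) a := NZDM.swap_easy ha hb
  have rA := stepA ha hb hra
  have rB : r ∈ I ⊔ Ideal.span {b ^ (k+1)} ⊔ Ideal.span {a ^ (k+2)} := by
    apply stepA hb' ha'
    rwa [sup_right_comm] at hrb
  obtain ⟨u, v, hAm⟩ := mem_sup3.1 rA
  obtain ⟨q, p, hBm⟩ := mem_sup3.1 rB
  have hbt1 : NZDM (I ⊔ Ideal.span {a ^ (k+1)}) (b ^ (k+1)) :=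
    (NZDM.pow_base ha hb (k+1) (by omega)).pow (k+1)
  have h1 : (q - v * b) * b ^ (k+1) ∈ I ⊔ Ideal.span {a ^ (k+1)} := mem_sup_span_single.2
    ⟨u - p * a, by
      have := I.sub_mem hAm hBm
      rwa [show r - u * a ^ (k+1) - v * b ^ (k+2) - (r - q * b ^ (k+1) - p * a ^ (k+2)) =
        (q - v * b) * b ^ (k+1) - (u - p * a) * a ^ (k+1) by ring] at this⟩
  obtain ⟨w, hw⟩ := mem_sup_span_single.1 (hbt1 _ h1)
  refine mem_sup4.2 ⟨p, v, w, ?_⟩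
  have := I.add_mem hBm (I.mul_mem_right (b ^ (k+1)) hw)
  rwa [show r - q * b ^ (k+1) - p * a ^ (k+2) + (q - v * b - w * a ^ (k+1)) * b ^ (k+1) =
    r - p * a ^ (k+2) - v * b ^ (k+2) - w * (a * b) ^ (k+1) by ring] at this

end Aux

/-- `x 0, …, x (d-1)` is a regular sequence: the ideal it generates is proper and each
`x i` is a non-zerodivisor modulo the ideal generated by the previous ones. -/
def IsRegSeq {R : Type*} [CommRing R] {d : ℕ} (x : Fin d → R) : Prop :=
  Ideal.span (Set.range x) ≠ ⊤ ∧
    ∀ i : Fin d, ∀ r : R,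
      r * x i ∈ Ideal.span (x '' Set.Iio i) → r ∈ Ideal.span (x '' Set.Iio i)

/-- A Noetherian local ring is Cohen–Macaulay iff it admits a system of parameters
(of length equal to its Krull dimension, inside the maximal ideal) that is a regular
sequence. -/
def IsCohenMacaulayLocalRing (R : Type*) [CommRing R] [IsLocalRing R] : Prop :=
  ∃ (d : ℕ) (x : Fin d → R), (∀ i, x i ∈ IsLocalRing.maximalIdeal R) ∧ IsRegSeq x ∧
    (d : WithBot (WithTop ℕ)) = ringKrullDim R

/-- in a CM local ring with regular sequence `x_1, …, x_d` and `t ≥ 2`,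
for `J = (x_1^t, x_2^t, x_3, …, x_d)` one has
`(J : (x_1, x_2)) = (x_1^t, x_2^t, x_3, …, x_d, (x_1 x_2)^{t-1})`. -/
theorem stmt9 {R : Type*} [CommRing R] [IsNoetherianRing R] [IsLocalRing R]
    (hCM : IsCohenMacaulayLocalRing R) {d : ℕ} (hd : 2 ≤ d) (x : Fin d → R)
    (hreg : IsRegSeq x) (t : ℕ) (ht : 2 ≤ t) (J : Ideal R)
    (hJ : J = Ideal.span (Set.range fun j : Fin d => if (j : ℕ) < 2 then x j ^ t else x j)) :
    J.colon (Ideal.span {x ⟨0, by omega⟩, x ⟨1, by omega⟩}) =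
      J ⊔ Ideal.span {(x ⟨0, by omega⟩ * x ⟨1, by omega⟩) ^ (t - 1)} := by
  obtain ⟨k, rfl⟩ : ∃ k, t = k + 2 := ⟨t - 2, by omega⟩
  have h0 : (0 : ℕ) < d := by omega
  have h1 : (1 : ℕ) < d := by omega
  set a : R := x ⟨0, h0⟩ with ha_def
  set b : R := x ⟨1, h1⟩ with hb_def
  -- membership in the maximal ideal
  have hle := IsLocalRing.le_maximalIdeal hreg.1
  have ham : a ∈ maximalIdeal R := hle (Ideal.subset_span ⟨⟨0, h0⟩, rfl⟩)
  have hbm : b ∈ maximalIdeal R := hle (Ideal.subset_span ⟨⟨1, h1⟩, rfl⟩)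
  -- the tail ideals
  set T : ℕ → Ideal R :=
    fun j => Ideal.span (x '' {i : Fin d | 2 ≤ (i : ℕ) ∧ (i : ℕ) < j}) with hTdef
  have hT2 : T 2 = ⊥ := by
    have hs : {i : Fin d | 2 ≤ (i : ℕ) ∧ (i : ℕ) < 2} = ∅ := by
      ext i; simp; omega
    simp [hTdef, hs]
    intro _ _ hi1 hi2 _; omega
  have hTsucc : ∀ j, 2 ≤ j → ∀ hjd : j < d,
      T (j + 1) = T j ⊔ Ideal.span {x ⟨j, hjd⟩} := by
    intro j hj hjd
    have hs : {i : Fin d | 2 ≤ (i : ℕ) ∧ (i : ℕ) < j + 1} =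
        insert (⟨j, hjd⟩ : Fin d) {i : Fin d | 2 ≤ (i : ℕ) ∧ (i : ℕ) < j} := by
      ext i
      simp [Fin.ext_iff]
      omega
    rw [hTdef]
    simp only [hs, Set.image_insert_eq, Ideal.span_insert]
    rw [sup_comm]
  have hIio0 : Ideal.span (x '' Set.Iio (⟨0, h0⟩ : Fin d)) = ⊥ := by
    have : Set.Iio (⟨0, h0⟩ : Fin d) = ∅ := by
      ext i; simp [Fin.lt_def]
    simp [this]
  have hIio1 : Ideal.span (x '' Set.Iio (⟨1, h1⟩ : Fin d)) = Ideal.span {a} := by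
    have : Set.Iio (⟨1, h1⟩ : Fin d) = {⟨0, h0⟩} := by
      ext i
      simp [Fin.lt_def, Fin.ext_iff]
    simp [this, ha_def]
  have hIioj : ∀ j, 2 ≤ j → ∀ hjd : j < d,
      Ideal.span (x '' Set.Iio (⟨j, hjd⟩ : Fin d)) = T j ⊔ Ideal.span {a} ⊔ Ideal.span {b} := by
    intro j hj hjd
    have hs : Set.Iio (⟨j, hjd⟩ : Fin d) =
        insert (⟨0, h0⟩ : Fin d) (insert (⟨1, h1⟩ : Fin d)
          {i : Fin d | 2 ≤ (i : ℕ) ∧ (i : ℕ) < j}) := by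
      ext i
      simp [Fin.lt_def, Fin.ext_iff]
      omega
    rw [hs]
    simp only [Set.image_insert_eq, Ideal.span_insert]
    rw [← ha_def, ← hb_def, hTdef]
    rw [sup_comm (Ideal.span {b}) _, ← sup_assoc, sup_comm (Ideal.span {a}) _]
  -- the main induction: a, b stay a regular sequence modulo the tail
  have main : ∀ j, 2 ≤ j → j ≤ d → NZDM (T j) a ∧ NZDM (T j ⊔ Ideal.span {a}) b := by
    intro j hj
    induction j, hj using Nat.le_induction with
    | base =>
      intro _
      rw [hT2]
      constructor
      · intro r hr
        have := hreg.2 ⟨0, h0⟩ r (by rw [hIio0]; exact hr)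
        rwa [hIio0] at this
      · rw [bot_sup_eq]
        intro r hr
        have := hreg.2 ⟨1, h1⟩ r (by rw [hIio1]; exact hr)
        rwa [hIio1] at this
    | succ j hj ih =>
      intro hjd1
      have hjd : j < d := by omega
      obtain ⟨haj, hbj⟩ := ih (by omega)
      have hxi : NZDM ((T j ⊔ Ideal.span {a}) ⊔ Ideal.span {b}) (x ⟨j, hjd⟩) := by
        intro r hr
        have := hreg.2 ⟨j, hjd⟩ r (by rw [hIioj j hj hjd]; exact hr)
        rwa [hIioj j hj hjd] at this
      have h1' : NZDM (T j ⊔ Ideal.span {a}) (x ⟨j, hjd⟩) :=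
        NZDM.swap_nak hbm hbj hxi
      have h2' : NZDM ((T j ⊔ Ideal.span {a}) ⊔ Ideal.span {x ⟨j, hjd⟩}) b :=
        NZDM.swap_easy hbj hxi
      have h3' : NZDM (T j ⊔ Ideal.span {x ⟨j, hjd⟩}) a :=
        NZDM.swap_easy haj h1'
      rw [hTsucc j hj hjd]
      exact ⟨h3', by rwa [sup_right_comm] at h2'⟩
  obtain ⟨haI, hbI⟩ := main d (by omega) le_rfl
  -- identify J
  have hJeq : J = T d ⊔ Ideal.span {a ^ (k + 2)} ⊔ Ideal.span {b ^ (k + 2)} := by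
    have hrange : (Set.range fun j : Fin d => if (j : ℕ) < 2 then x j ^ (k + 2) else x j) =
        insert (a ^ (k + 2)) (insert (b ^ (k + 2))
          (x '' {i : Fin d | 2 ≤ (i : ℕ) ∧ (i : ℕ) < d})) := by
      ext y
      constructor
      · rintro ⟨j, rfl⟩
        by_cases hc : (j : ℕ) < 2
        · rcases (by omega : (j : ℕ) = 0 ∨ (j : ℕ) = 1) with h | h
          · left
            have hj0 : j = (⟨0, h0⟩ : Fin d) := by ext; simpa using h
            rw [hj0]; simp [ha_def]
          · right; left
            have hj1 : j = (⟨1, h1⟩ : Fin d) := by ext; simpa using h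
            rw [hj1]; simp [hb_def]
        · right; right
          refine ⟨j, ⟨by omega, j.isLt⟩, ?_⟩
          show x j = if (j : ℕ) < 2 then x j ^ (k + 2) else x j
          rw [if_neg hc]
      · rintro (rfl | rfl | ⟨i, hi, rfl⟩)
        · exact ⟨⟨0, h0⟩, by simp [ha_def]⟩
        · exact ⟨⟨1, h1⟩, by simp [hb_def]⟩
        · obtain ⟨hi2, hid⟩ := hi
          refine ⟨i, ?_⟩
          show (if (i : ℕ) < 2 then x i ^ (k + 2) else x i) = x i
          rw [if_neg (by omega)]
    rw [hJ, hrange]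
    simp only [Ideal.span_insert]
    rw [hTdef]
    rw [sup_comm (Ideal.span {b ^ (k+2)}) _, ← sup_assoc,
      sup_comm (Ideal.span {a ^ (k+2)}) _]
  have hk1 : k + 2 - 1 = k + 1 := by omega
  rw [hJeq, hk1]
  show (T d ⊔ Ideal.span {a ^ (k+2)} ⊔ Ideal.span {b ^ (k+2)}).colon (Ideal.span {a, b}) =
    T d ⊔ Ideal.span {a ^ (k+2)} ⊔ Ideal.span {b ^ (k+2)} ⊔ Ideal.span {(a * b) ^ (k+1)}
  set J' : Ideal R := T d ⊔ Ideal.span {a ^ (k+2)} ⊔ Ideal.span {b ^ (k+2)} with hJ'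
  ext r
  constructor
  · intro hr
    have hra : r * a ∈ J' := by
      have := Submodule.mem_colon.1 hr a (Ideal.subset_span (by simp))
      rwa [smul_eq_mul] at this
    have hrb : r * b ∈ J' := by
      have := Submodule.mem_colon.1 hr b (Ideal.subset_span (by simp))
      rwa [smul_eq_mul] at this
    exact keyColon ham haI hbI hra hrb
  · intro hr
    obtain ⟨s, hs⟩ := mem_sup_span_single.1 hr
    have hga : ((a * b) ^ (k + 1)) * a ∈ J' := by
      apply Ideal.mem_sup_left
      apply Ideal.mem_sup_right
      exact Ideal.mem_span_singleton'.2 ⟨b ^ (k + 1), by ring⟩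
    have hgb : ((a * b) ^ (k + 1)) * b ∈ J' := by
      apply Ideal.mem_sup_right
      exact Ideal.mem_span_singleton'.2 ⟨a ^ (k + 1), by ring⟩
    rw [Submodule.mem_colon]
    intro p hp
    rw [Ideal.span_insert] at hp
    obtain ⟨y, hy, z, hz, rfl⟩ := Submodule.mem_sup.1 hp
    obtain ⟨c, rfl⟩ := Ideal.mem_span_singleton'.1 hy
    obtain ⟨e, rfl⟩ := Ideal.mem_span_singleton'.1 hz
    have heq : r • (c * a + e * b) =
        (r - s * (a * b) ^ (k + 1)) * (c * a + e * b) +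
        (s * c) * ((a * b) ^ (k + 1) * a) + (s * e) * ((a * b) ^ (k + 1) * b) := by
      rw [smul_eq_mul]; ring
    rw [heq]
    exact J'.add_mem (J'.add_mem (J'.mul_mem_right _ hs) (J'.mul_mem_left _ hga))
      (J'.mul_mem_left _ hgb)
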